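/- Let M and M' be mechanisms assigning to each database x a probability distribution on a common output space, and suppose that for every database x the statistical distance between M(x) and M'(x) is at most γ. If M is (ε, δ)-differentially private with respect to an adjacency relation on databases, then M' is (ε, (e^ε + 1)·γ + δ)-differentially private with respect to the same adjacency relation. -/

import Mathlib

open scoped ENNReal

/-- `rdown k z` rounds the integer `z` down to the nearest multiple of `k`. -/
def rdown (k : ℕ) (z : ℤ) : ℤ := z - z % (k : ℤ)

/-- Insert-delete adjacency on databases: `x'` is obtained from `x` by inserting or
deleting exactly one entry. -/
def Adjacent {α : Type*} (x x' : List α) : Prop :=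
  (∃ a l₁ l₂, x = l₁ ++ l₂ ∧ x' = l₁ ++ a :: l₂) ∨
  (∃ a l₁ l₂, x' = l₁ ++ l₂ ∧ x = l₁ ++ a :: l₂)

/-- The coordinatewise sum of the entries of a database `x ∈ ({0,1}^d)^*`. -/
def dbSum {d : ℕ} (x : List (Fin d → Bool)) (i : Fin d) : ℤ :=
  (x.map fun row => if row i then (1 : ℤ) else 0).sum

/-- `(ε, δ)`-differential privacy of a mechanism `M` with respect to an adjacency
relation `Adj`. -/
def IsDP {X : Type*} {Y : Type*} (Adj : X → X → Prop) (M : X → PMF Y) (ε δ : ℝ) : Prop :=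
  ∀ x x', Adj x x' → ∀ S : Set Y,
    (M x).toOuterMeasure S ≤
      ENNReal.ofReal (Real.exp ε) * (M x').toOuterMeasure S + ENNReal.ofReal δ

/-- If the statistical distance between `M x` and `M' x` is at most `γ` for every
database `x`, and `M` is `(ε, δ)`-DP, then `M'` is `(ε, (e^ε + 1)γ + δ)`-DP. -/
theorem stmt1 {X : Type*} {Y : Type*} (Adj : X → X → Prop) (M M' : X → PMF Y)
    (ε δ γ : ℝ) (hγ : 0 ≤ γ) (hδ : 0 ≤ δ)
    (hdist : ∀ x (S : Set Y),
        (M x).toOuterMeasure S ≤ (M' x).toOuterMeasure S + ENNReal.ofReal γ ∧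
        (M' x).toOuterMeasure S ≤ (M x).toOuterMeasure S + ENNReal.ofReal γ)
    (hM : IsDP Adj M ε δ) :
    IsDP Adj M' ε ((Real.exp ε + 1) * γ + δ) := by
  intro x x' hadj S
  have h1 : (M' x).toOuterMeasure S ≤ (M x).toOuterMeasure S + ENNReal.ofReal γ :=
    (hdist x S).2
  have h2 := hM x x' hadj S
  have h3 : (M x').toOuterMeasure S ≤ (M' x').toOuterMeasure S + ENNReal.ofReal γ :=
    (hdist x' S).1
  have he : (0:ℝ) ≤ Real.exp ε := (Real.exp_pos ε).le
  calc (M' x).toOuterMeasure S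
      ≤ (M x).toOuterMeasure S + ENNReal.ofReal γ := h1
    _ ≤ (ENNReal.ofReal (Real.exp ε) * (M x').toOuterMeasure S + ENNReal.ofReal δ)
          + ENNReal.ofReal γ := add_le_add h2 le_rfl
    _ ≤ (ENNReal.ofReal (Real.exp ε) * ((M' x').toOuterMeasure S + ENNReal.ofReal γ)
          + ENNReal.ofReal δ) + ENNReal.ofReal γ := by
        gcongr
    _ = ENNReal.ofReal (Real.exp ε) * (M' x').toOuterMeasure S
          + ENNReal.ofReal ((Real.exp ε + 1) * γ + δ) := by
        rw [mul_add]
        rw [ENNReal.ofReal_add (by positivity) hδ, ENNReal.ofReal_mul (by positivity),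
          ENNReal.ofReal_add he (by norm_num), ENNReal.ofReal_one]
        ring
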